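/- Let v = Σᵢ₌₁ˢ nᵢvᵢ with s ≥ 3, where the vᵢ are distinct primitive Mukai vectors on an abelian surface with ⟨vᵢ²⟩ ≥ 0, nᵢ ≥ 1, all Z_{(β,ω)}(vᵢ) lying on the same ray as Z_{(β,ω)}(v) (equal phases), and all d_β(vᵢ) > 0. Then for every isotropic Mukai vector w with the same phase as v and d_β(w) > 0, one has ⟨v, w⟩ ≥ 2. -/

import Mathlib

variable {N : Type*} [AddCommGroup N] [Module ℚ N]

/-- The Mukai pairing on the rational Mukai lattice `Λ_ℚ = ℚ × N × ℚ`,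
`⟨x,y⟩ = (x₁,y₁) − x₀y₂ − x₂y₀`. -/
def mpair (B : N →ₗ[ℚ] N →ₗ[ℚ] ℚ) (x y : ℚ × N × ℚ) : ℚ :=
  B x.2.1 y.2.1 - x.1 * y.2.2 - x.2.2 * y.1

/-- `e^β = (1, β, (β,β)/2)`. -/
def mexp (B : N →ₗ[ℚ] N →ₗ[ℚ] ℚ) (β : N) : ℚ × N × ℚ :=
  (1, β, B β β / 2)

/-- The fundamental class `ϱ`. -/
def mrho : ℚ × N × ℚ := (0, 0, 1)

/-- `r_β(v) = −⟨v,ϱ⟩`. -/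
def rInv (B : N →ₗ[ℚ] N →ₗ[ℚ] ℚ) (v : ℚ × N × ℚ) : ℚ :=
  -(mpair B v mrho)

/-- `a_β(v) = −⟨v, e^β⟩`. -/
def aInv (B : N →ₗ[ℚ] N →ₗ[ℚ] ℚ) (β : N) (v : ℚ × N × ℚ) : ℚ :=
  -(mpair B v (mexp B β))

/-- `d_β(v) = ⟨v, H + (H,β)ϱ⟩ / (H,H)`. -/
def dInv (B : N →ₗ[ℚ] N →ₗ[ℚ] ℚ) (H β : N) (v : ℚ × N × ℚ) : ℚ :=
  mpair B v (0, H, B H β) / B H H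

/-- `D_β(v)`, the `H`-orthogonal part of the `NS`-component of `v`. -/
def DInv (B : N →ₗ[ℚ] N →ₗ[ℚ] ℚ) (H β : N) (v : ℚ × N × ℚ) : N :=
  v.2.1 - rInv B v • β - dInv B H β v • H

/-- The stability function `Z_{(β,ω)}(v) = ⟨e^{β+iω}, v⟩` with `ω = t•H`,
expanded as `⟨e^β,v⟩ + i⟨ω + (ω,β)ϱ, v⟩ − ((ω,ω)/2)⟨ϱ,v⟩`. -/
noncomputable def Zst (B : N →ₗ[ℚ] N →ₗ[ℚ] ℚ) (H β : N) (t : ℚ)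
    (v : ℚ × N × ℚ) : ℂ :=
  ((mpair B (mexp B β) v : ℚ) : ℂ)
    + ((mpair B (0, t • H, B (t • H) β) v : ℚ) : ℂ) * Complex.I
    - ((B (t • H) (t • H) / 2 : ℚ) : ℂ) * ((mpair B mrho v : ℚ) : ℂ)

section helpers

variable (B : N →ₗ[ℚ] N →ₗ[ℚ] ℚ) (H β : N) (t : ℚ)

lemma dInv_sub_smul (c : ℚ) (x y : ℚ × N × ℚ) :
    dInv B H β (x - c • y) = dInv B H β x - c * dInv B H β y := by
  simp [dInv, mpair, Prod.fst_sub, Prod.snd_sub, Prod.smul_fst, Prod.smul_snd,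
    map_sub, map_smul, smul_eq_mul]
  ring

lemma aInv_sub_smul (c : ℚ) (x y : ℚ × N × ℚ) :
    aInv B β (x - c • y) = aInv B β x - c * aInv B β y := by
  simp [aInv, mpair, Prod.fst_sub, Prod.snd_sub, Prod.smul_fst, Prod.smul_snd,
    map_sub, map_smul, smul_eq_mul]
  ring

lemma mpair_sub_smul_self (hB : ∀ a b : N, B a b = B b a) (c : ℚ) (x y : ℚ × N × ℚ) :
    mpair B (x - c • y) (x - c • y)
      = mpair B x x - 2 * c * mpair B x y + c ^ 2 * mpair B y y := by
  simp [mpair, Prod.fst_sub, Prod.snd_sub, Prod.smul_fst, Prod.smul_snd,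
    map_sub, map_smul, smul_eq_mul, LinearMap.sub_apply, LinearMap.smul_apply,
    hB y.2.1 x.2.1]
  ring

lemma Zst_eq (hB : ∀ a b : N, B a b = B b a) (hH : B H H ≠ 0) (v : ℚ × N × ℚ) :
    Zst B H β t v = ((t ^ 2 * B H H / 2 * v.1 - aInv B β v : ℚ) : ℂ)
      + ((t * dInv B H β v * B H H : ℚ) : ℂ) * Complex.I := by
  have h1 : mpair B (mexp B β) v = -(aInv B β v) := by
    simp [mpair, mexp, aInv, hB β v.2.1]; ring
  have h2 : mpair B (0, t • H, B (t • H) β) v = t * dInv B H β v * B H H := by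
    simp only [mpair, dInv, map_smul, smul_eq_mul, LinearMap.smul_apply, hB v.2.1 H]
    field_simp
    ring
  have h3 : mpair B mrho v = -v.1 := by simp [mpair, mrho]
  have h4 : B (t • H) (t • H) = t ^ 2 * B H H := by
    simp [map_smul, smul_eq_mul, LinearMap.smul_apply]; ring
  rw [Zst, h2, h3, h4]
  rw [h1]
  push_cast
  ring

end helpers

section main

variable (B : N →ₗ[ℚ] N →ₗ[ℚ] ℚ) (H β : N) (t : ℚ)

lemma ray_rel (hB : ∀ a b : N, B a b = B b a) (hH : 0 < B H H) (ht : 0 < t)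
    {x y V : ℚ × N × ℚ}
    (hx : ∃ c : ℝ, 0 < c ∧ Zst B H β t x = (c : ℂ) * Zst B H β t V)
    (hy : ∃ c : ℝ, 0 < c ∧ Zst B H β t y = (c : ℂ) * Zst B H β t V) :
    (t ^ 2 * B H H / 2 * x.1 - aInv B β x) * dInv B H β y
      = (t ^ 2 * B H H / 2 * y.1 - aInv B β y) * dInv B H β x := by
  obtain ⟨cx, hcx, hx⟩ := hx
  obtain ⟨cy, hcy, hy⟩ := hy
  rw [Zst_eq B H β t hB hH.ne' x, Zst_eq B H β t hB hH.ne' V] at hx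
  rw [Zst_eq B H β t hB hH.ne' y, Zst_eq B H β t hB hH.ne' V] at hy
  rw [Complex.ext_iff] at hx hy
  simp only [Complex.add_re, Complex.add_im, Complex.mul_re, Complex.mul_im,
    Complex.I_re, Complex.I_im, Complex.ratCast_re, Complex.ratCast_im,
    Complex.ofReal_re, Complex.ofReal_im] at hx hy
  obtain ⟨hx1, hx2⟩ := hx
  obtain ⟨hy1, hy2⟩ := hy
  simp only [mul_zero, zero_mul, mul_one, sub_zero, zero_add, add_zero, zero_sub] at hx1 hx2 hy1 hy2
  have key : ((t ^ 2 * B H H / 2 * x.1 - aInv B β x : ℚ) : ℝ)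
        * ((t * dInv B H β y * B H H : ℚ) : ℝ)
      = ((t ^ 2 * B H H / 2 * y.1 - aInv B β y : ℚ) : ℝ)
        * ((t * dInv B H β x * B H H : ℚ) : ℝ) := by
    rw [hx1, hy1, hx2, hy2]; ring_nf
  have key2 : (t ^ 2 * B H H / 2 * x.1 - aInv B β x) * (t * dInv B H β y * B H H)
      = (t ^ 2 * B H H / 2 * y.1 - aInv B β y) * (t * dInv B H β x * B H H) := by
    exact_mod_cast key
  have htH : t * B H H ≠ 0 := by positivity
  have key3 : ((t ^ 2 * B H H / 2 * x.1 - aInv B β x) * dInv B H β y) * (t * B H H)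
      = ((t ^ 2 * B H H / 2 * y.1 - aInv B β y) * dInv B H β x) * (t * B H H) := by
    linear_combination key2
  exact mul_right_cancel₀ htH key3

lemma ker_neg (hB : ∀ a b : N, B a b = B b a) (hH : 0 < B H H)
    (hneg : ∀ x : N, B x H = 0 → x ≠ 0 → B x x < 0) (ht : 0 < t)
    (u : ℚ × N × ℚ) (hdu : dInv B H β u = 0)
    (hqu : t ^ 2 * B H H / 2 * u.1 - aInv B β u = 0) :
    mpair B u u ≤ 0 ∧ (mpair B u u = 0 → u = 0) := by
  set D : N := u.2.1 - u.1 • β with hD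
  have hnum : B u.2.1 H - u.1 * B H β = 0 := by
    have := hdu
    rw [dInv, div_eq_zero_iff] at this
    rcases this with h | h
    · simpa [mpair] using h
    · exact absurd h hH.ne'
  have hDH : B D H = 0 := by
    simp only [hD, map_sub, map_smul, LinearMap.sub_apply, LinearMap.smul_apply,
      smul_eq_mul]
    rw [hB β H]
    linarith [hnum]
  have hDD : B D D ≤ 0 := by
    rcases eq_or_ne D 0 with h | h
    · simp [h]
    · exact (hneg D hDH h).le
  have hu21 : u.2.1 = D + u.1 • β := by simp [hD]
  have hkey : mpair B u u = B D D - t ^ 2 * B H H * u.1 ^ 2 := by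
    have ha : aInv B β u = u.2.2 + u.1 * B β β / 2 - B u.2.1 β := by
      simp [aInv, mpair, mexp]; ring
    rw [mpair, hu21]
    simp only [map_add, map_smul, LinearMap.add_apply, LinearMap.smul_apply,
      smul_eq_mul]
    have hbD : B β D = B D β := hB β D
    have hu22 : u.2.2 = t ^ 2 * B H H / 2 * u.1 - u.1 * B β β / 2 + B u.2.1 β := by
      rw [ha] at hqu; linarith
    rw [hu22, hu21]
    simp only [map_add, map_smul, LinearMap.add_apply, LinearMap.smul_apply,
      smul_eq_mul, hbD]
    ring
  have hpos : 0 < t ^ 2 * B H H := by positivity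
  have hsqn : 0 ≤ t ^ 2 * B H H * u.1 ^ 2 := by positivity
  constructor
  · linarith [hkey, hDD, hsqn]
  · intro h0
    have h1 : t ^ 2 * B H H * u.1 ^ 2 ≤ 0 := by linarith [hkey, hDD]
    have hu1 : u.1 = 0 := by
      by_contra hne
      have h2 : 0 < u.1 ^ 2 := by positivity
      nlinarith [h1, hpos, h2]
    have hDD0 : B D D = 0 := by
      rw [hu1] at hkey
      simp at hkey
      linarith [hkey, h0]
    have hD0 : D = 0 := by
      by_contra hne
      exact absurd hDD0 (hneg D hDH hne).ne
    have h21 : u.2.1 = 0 := by rw [hu21, hD0, hu1]; simp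
    have h22 : u.2.2 = 0 := by
      have ha : aInv B β u = u.2.2 + u.1 * B β β / 2 - B u.2.1 β := by
        simp [aInv, mpair, mexp]; ring
      rw [ha, hu1, h21] at hqu
      simpa using hqu
    have : u = (u.1, u.2.1, u.2.2) := rfl
    rw [this, hu1, h21, h22]
    rfl

lemma pos_pair (hB : ∀ a b : N, B a b = B b a) (hH : 0 < B H H)
    (hneg : ∀ x : N, B x H = 0 → x ≠ 0 → B x x < 0) (ht : 0 < t)
    {x y : ℚ × N × ℚ} (hxx : 0 ≤ mpair B x x) (hyy : 0 ≤ mpair B y y)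
    (hdx : 0 < dInv B H β x) (hdy : 0 < dInv B H β y)
    (hrel : (t ^ 2 * B H H / 2 * x.1 - aInv B β x) * dInv B H β y
      = (t ^ 2 * B H H / 2 * y.1 - aInv B β y) * dInv B H β x) :
    0 ≤ mpair B x y ∧ (mpair B x y = 0 → x = (dInv B H β x / dInv B H β y) • y) := by
  set c : ℚ := dInv B H β x / dInv B H β y with hc
  have hcpos : 0 < c := div_pos hdx hdy
  set u : ℚ × N × ℚ := x - c • y with hu
  have hdu : dInv B H β u = 0 := by
    rw [hu, dInv_sub_smul, hc, div_mul_cancel₀ _ hdy.ne']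
    ring
  have hfst : u.1 = x.1 - c * y.1 := by
    simp [hu, Prod.fst_sub, Prod.smul_fst, smul_eq_mul]
  have hcdy : c * dInv B H β y = dInv B H β x := by
    rw [hc]; field_simp
  have hfac : (t ^ 2 * B H H / 2 * x.1 - aInv B β x)
      - c * (t ^ 2 * B H H / 2 * y.1 - aInv B β y) = 0 := by
    have h3 : ((t ^ 2 * B H H / 2 * x.1 - aInv B β x)
        - c * (t ^ 2 * B H H / 2 * y.1 - aInv B β y)) * dInv B H β y = 0 := by
      linear_combination hrel - (t ^ 2 * B H H / 2 * y.1 - aInv B β y) * hcdy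
    rcases mul_eq_zero.mp h3 with h | h
    · exact h
    · exact absurd h hdy.ne'
  have hqu : t ^ 2 * B H H / 2 * u.1 - aInv B β u = 0 := by
    rw [hfst, aInv_sub_smul]
    linear_combination hfac
  obtain ⟨hle, heq⟩ := ker_neg B H β t hB hH hneg ht u hdu hqu
  have hexp : mpair B u u = mpair B x x - 2 * c * mpair B x y + c ^ 2 * mpair B y y := by
    rw [hu]; exact mpair_sub_smul_self B hB c x y
  constructor
  · nlinarith [hle, hexp, hxx, hyy, hcpos, sq_nonneg c]
  · intro h0
    have huu0 : mpair B u u = 0 := by nlinarith [hle, hexp, hxx, hyy, sq_nonneg c]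
    have := heq huu0
    rw [hu, sub_eq_zero] at this
    exact this

def mpairL (B : N →ₗ[ℚ] N →ₗ[ℚ] ℚ) (y : ℚ × N × ℚ) : (ℚ × N × ℚ) →ₗ[ℚ] ℚ where
  toFun x := mpair B x y
  map_add' a b := by
    simp [mpair, Prod.fst_add, Prod.snd_add, map_add, LinearMap.add_apply]
    ring
  map_smul' c a := by
    simp [mpair, Prod.smul_fst, Prod.smul_snd, map_smul, smul_eq_mul,
      LinearMap.smul_apply]
    ring

@[simp] lemma mpairL_apply (B : N →ₗ[ℚ] N →ₗ[ℚ] ℚ) (y x : ℚ × N × ℚ) :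
    mpairL B y x = mpair B x y := rfl

end main

/-- If `v = ∑ nᵢvᵢ` with `s ≥ 3` distinct primitive Mukai vectors of equal phase,
`⟨vᵢ²⟩ ≥ 0`, `nᵢ ≥ 1`, `d_β(vᵢ) > 0`, then every isotropic `w` of the same phase
with `d_β(w) > 0` satisfies `⟨v, w⟩ ≥ 2`. -/
theorem pairing_at_least_two (B : N →ₗ[ℚ] N →ₗ[ℚ] ℚ)
    (hB : ∀ a b : N, B a b = B b a) (H : N) (hH : 0 < B H H)
    (hneg : ∀ x : N, B x H = 0 → x ≠ 0 → B x x < 0)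
    (β : N) (t : ℚ) (ht : 0 < t)
    (s : ℕ) (hs : 3 ≤ s) (v_ : Fin s → ℚ × N × ℚ) (n : Fin s → ℕ)
    (hn : ∀ i, 1 ≤ n i) (hdist : Function.Injective v_)
    (hsq : ∀ i, 0 ≤ mpair B (v_ i) (v_ i))
    (hd : ∀ i, 0 < dInv B H β (v_ i))
    (hphase : ∀ i, ∃ c : ℝ, 0 < c ∧
        Zst B H β t (v_ i) = (c : ℂ) * Zst B H β t (∑ j, (n j : ℚ) • v_ j))
    (w : ℚ × N × ℚ) (hw0 : mpair B w w = 0)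
    (hwphase : ∃ c : ℝ, 0 < c ∧
        Zst B H β t w = (c : ℂ) * Zst B H β t (∑ j, (n j : ℚ) • v_ j))
    (hwd : 0 < dInv B H β w)
    (hint : ∀ i, ∃ m : ℤ, mpair B (v_ i) w = (m : ℚ))
    (hprim : ∀ i, ∀ q0 : ℚ, v_ i = q0 • w → q0 = 1 ∨ q0 = -1) :
    2 ≤ mpair B (∑ j, (n j : ℚ) • v_ j) w := by
  -- positivity for each i, with characterization of equality
  have hpp : ∀ i, 0 ≤ mpair B (v_ i) w ∧
      (mpair B (v_ i) w = 0 → v_ i = (dInv B H β (v_ i) / dInv B H β w) • w) := by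
    intro i
    exact pos_pair B H β t hB hH hneg ht (hsq i) hw0.ge (hd i) hwd
      (ray_rel B H β t hB hH ht (hphase i) hwphase)
  have heqw : ∀ i, mpair B (v_ i) w = 0 → v_ i = w := by
    intro i h0
    have h1 := (hpp i).2 h0
    have hcpos : 0 < dInv B H β (v_ i) / dInv B H β w := div_pos (hd i) hwd
    rcases hprim i _ h1 with h | h
    · rw [h, one_smul] at h1; exact h1
    · rw [h] at hcpos; norm_num at hcpos
  -- the exceptional set
  set S : Finset (Fin s) := Finset.univ.filter (fun i => mpair B (v_ i) w = 0) with hS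
  have hScard : S.card ≤ 1 := by
    apply Finset.card_le_one.mpr
    intro i hi j hj
    rw [hS, Finset.mem_filter] at hi hj
    exact hdist (by rw [heqw i hi.2, heqw j hj.2])
  have hTcard : 2 ≤ Sᶜ.card := by
    have : Sᶜ.card = s - S.card := by
      rw [Finset.card_compl, Fintype.card_fin]
    omega
  have hone : ∀ i ∈ Sᶜ, (1 : ℚ) ≤ mpair B (v_ i) w := by
    intro i hi
    have hne : mpair B (v_ i) w ≠ 0 := by
      rw [Finset.mem_compl, hS, Finset.mem_filter] at hi
      exact fun h => hi ⟨Finset.mem_univ i, h⟩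
    obtain ⟨m, hm⟩ := hint i
    have h0 : 0 ≤ (m : ℚ) := hm ▸ (hpp i).1
    have hm0 : m ≠ 0 := by
      intro h; rw [h] at hm; simp at hm; exact hne hm
    have : 1 ≤ m := by
      have : 0 ≤ m := by exact_mod_cast h0
      omega
    rw [hm]; exact_mod_cast this
  -- expand the sum
  have hsum : mpair B (∑ j, (n j : ℚ) • v_ j) w
      = ∑ j, (n j : ℚ) * mpair B (v_ j) w := by
    calc mpair B (∑ j, (n j : ℚ) • v_ j) w
        = mpairL B w (∑ j, (n j : ℚ) • v_ j) := rfl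
      _ = ∑ j, mpairL B w ((n j : ℚ) • v_ j) := map_sum _ _ _
      _ = ∑ j, (n j : ℚ) * mpair B (v_ j) w := by
          simp [map_smul, smul_eq_mul]
  rw [hsum]
  have hterm : ∀ j ∈ Sᶜ, (1 : ℚ) ≤ (n j : ℚ) * mpair B (v_ j) w := by
    intro j hj
    have h1 : (1 : ℚ) ≤ (n j : ℚ) := by exact_mod_cast hn j
    have h2 := hone j hj
    nlinarith [h1, h2]
  have hstep1 : ∑ j ∈ Sᶜ, (n j : ℚ) * mpair B (v_ j) w
      ≤ ∑ j, (n j : ℚ) * mpair B (v_ j) w := by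
    apply Finset.sum_le_sum_of_subset_of_nonneg (Finset.subset_univ _)
    intro j _ _
    have := (hpp j).1
    positivity
  have hstep2 : (Sᶜ.card : ℚ) ≤ ∑ j ∈ Sᶜ, (n j : ℚ) * mpair B (v_ j) w := by
    calc (Sᶜ.card : ℚ) = ∑ _j ∈ Sᶜ, (1 : ℚ) := by simp
      _ ≤ ∑ j ∈ Sᶜ, (n j : ℚ) * mpair B (v_ j) w := Finset.sum_le_sum hterm
  have : (2 : ℚ) ≤ (Sᶜ.card : ℚ) := by exact_mod_cast hTcard
  linarith
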